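/- arXiv:2504.04407 — 6 statements merged into one kernel-verified Lean document; each statement's English description precedes it below -/
import Mathlib

section
/- Let z be a point in the unit disk model of the hyperbolic plane (|z| < 1). The orthogonal projection of z onto the geodesic line with endpoints -1 and 1 equals (sqrt(|z|^2 + 2 Re(z) + 1) - sqrt(|z|^2 - 2 Re(z) + 1)) / (sqrt(|z|^2 + 2 Re(z) + 1) + sqrt(|z|^2 - 2 Re(z) + 1)), i.e., this value is the unique real point w in (-1,1) minimizing the hyperbolic distance from z to the real axis. -/
/-- The orthogonal projection of a point `z` of the unit disk onto the geodesic `(-1,1)`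
(the real diameter) is the unique real point `w ∈ (-1,1)` minimizing the hyperbolic
distance from `z`, where the distance is encoded by
`cosh²(d(z,w)/2) = |1 - z w̄|² / ((1-|z|²)(1-|w|²))`. -/
theorem stmt_0 (z : ℂ) (hz : ‖z‖ < 1) :
    let w₀ : ℝ := (Real.sqrt (‖z‖ ^ 2 + 2 * z.re + 1) -
        Real.sqrt (‖z‖ ^ 2 - 2 * z.re + 1)) /
      (Real.sqrt (‖z‖ ^ 2 + 2 * z.re + 1) +
        Real.sqrt (‖z‖ ^ 2 - 2 * z.re + 1))
    let D : ℝ → ℝ := fun w =>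
      ‖1 - z * (starRingEnd ℂ) (w : ℂ)‖ ^ 2 /
        ((1 - ‖z‖ ^ 2) * (1 - w ^ 2))
    w₀ ∈ Set.Ioo (-1 : ℝ) 1 ∧
      ∀ w ∈ Set.Ioo (-1 : ℝ) 1, D w₀ ≤ D w ∧ (D w = D w₀ → w = w₀) := by
  intro w₀ D
  set b : ℝ := z.re with hb
  set c : ℝ := ‖z‖ ^ 2 with hc
  have hcval : c = b ^ 2 + z.im ^ 2 := by
    rw [hc, Complex.sq_norm, Complex.normSq_apply]; ring
  have hbabs : |b| ≤ ‖z‖ := Complex.abs_re_le_norm z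
  have hb1 : b < 1 := lt_of_le_of_lt (le_trans (le_abs_self b) hbabs) hz
  have hb1' : -1 < b := by
    have h2 : -‖z‖ ≤ b := by
      have := neg_abs_le b
      nlinarith [abs_nonneg b]
    linarith
  have hc1 : c < 1 := by
    rw [hc]; nlinarith [norm_nonneg z]
  set A : ℝ := Real.sqrt (c + 2 * b + 1) with hA
  set B : ℝ := Real.sqrt (c - 2 * b + 1) with hB
  have hApos2 : 0 < c + 2 * b + 1 := by nlinarith [sq_nonneg z.im]
  have hBpos2 : 0 < c - 2 * b + 1 := by nlinarith [sq_nonneg z.im]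
  have hA2 : A ^ 2 = c + 2 * b + 1 := Real.sq_sqrt hApos2.le
  have hB2 : B ^ 2 = c - 2 * b + 1 := Real.sq_sqrt hBpos2.le
  have hApos : 0 < A := Real.sqrt_pos.mpr hApos2
  have hBpos : 0 < B := Real.sqrt_pos.mpr hBpos2
  have hABne : A + B ≠ 0 := by positivity
  have hw0 : w₀ = (A - B) / (A + B) := rfl
  have hc0 : (0:ℝ) ≤ c := by rw [hc]; positivity
  -- formula for the numerator
  have hnum : ∀ w : ℝ, ‖1 - z * (starRingEnd ℂ) (w : ℂ)‖ ^ 2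
      = 1 - 2 * b * w + c * w ^ 2 := by
    intro w
    rw [Complex.sq_norm, Complex.normSq_apply]
    simp [Complex.sub_re, Complex.sub_im, Complex.mul_re, Complex.mul_im]
    rw [hcval]; ring
  have hDval : ∀ w : ℝ, D w = (1 - 2 * b * w + c * w ^ 2) / ((1 - c) * (1 - w ^ 2)) := by
    intro w
    show ‖1 - z * (starRingEnd ℂ) (w : ℂ)‖ ^ 2 / _ = _
    rw [hnum w]
  clear_value w₀ D A B b c
  have hw0mem : w₀ ∈ Set.Ioo (-1 : ℝ) 1 := by
    rw [hw0]
    constructor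
    · rw [lt_div_iff₀ (by positivity)]; nlinarith
    · rw [div_lt_one (by positivity)]; nlinarith
  have hw0sq : w₀ ^ 2 < 1 := by
    have h1 := hw0mem.1; have h2 := hw0mem.2; nlinarith
  have hkey : b * (1 + w₀ ^ 2) = (c + 1) * w₀ := by
    rw [hw0]
    field_simp
    linear_combination (2 * b - (c + 1)) * hA2 +
      (2 * b + (c + 1)) * hB2
  refine ⟨hw0mem, fun w hw => ?_⟩
  have hwsq : w ^ 2 < 1 := by
    have h1 := hw.1; have h2 := hw.2; nlinarith
  have hden : (0 : ℝ) < (1 - c) * (1 - w ^ 2) := by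
    apply mul_pos <;> linarith
  have hden0 : (0 : ℝ) < (1 - c) * (1 - w₀ ^ 2) := by
    apply mul_pos <;> linarith
  have hid : (1 + w₀ ^ 2) * ((1 - 2 * b * w + c * w ^ 2) * (1 - w₀ ^ 2)
        - (1 - 2 * b * w₀ + c * w₀ ^ 2) * (1 - w ^ 2))
      = (c + 1) * (w - w₀) ^ 2 * (1 - w₀ ^ 2) := by
    linear_combination (-2 * (w - w₀) * (1 + w * w₀)) * hkey
  have hcpos : (0 : ℝ) < c + 1 := by linarith
  have hXnn : 0 ≤ (1 - 2 * b * w + c * w ^ 2) * (1 - w₀ ^ 2)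
      - (1 - 2 * b * w₀ + c * w₀ ^ 2) * (1 - w ^ 2) := by
    have hY : 0 ≤ (c + 1) * (w - w₀) ^ 2 * (1 - w₀ ^ 2) := by
      have : (0:ℝ) < 1 - w₀ ^ 2 := by linarith
      positivity
    have hpos : (0:ℝ) < 1 + w₀ ^ 2 := by positivity
    exact (mul_nonneg_iff_of_pos_left hpos).mp (hid ▸ hY)
  have hle : D w₀ ≤ D w := by
    rw [hDval, hDval, div_le_div_iff₀ hden0 hden]
    linarith [mul_nonneg (show (0:ℝ) ≤ 1 - c by linarith) hXnn]
  refine ⟨hle, fun heq => ?_⟩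
  have heq' : (1 - c) * ((1 - 2 * b * w + c * w ^ 2) * (1 - w₀ ^ 2)
      - (1 - 2 * b * w₀ + c * w₀ ^ 2) * (1 - w ^ 2)) = 0 := by
    have h1 := hDval w
    have h2 := hDval w₀
    rw [h1, h2] at heq
    rw [div_eq_div_iff hden.ne' hden0.ne'] at heq
    linear_combination heq
  have hX : (1 - 2 * b * w + c * w ^ 2) * (1 - w₀ ^ 2)
      - (1 - 2 * b * w₀ + c * w₀ ^ 2) * (1 - w ^ 2) = 0 := by
    rcases mul_eq_zero.mp heq' with h | h
    · exfalso; linarith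
    · exact h
  have hsq : (c + 1) * (w - w₀) ^ 2 * (1 - w₀ ^ 2) = 0 := by
    rw [← hid, hX, mul_zero]
  have hz0 : (w - w₀) ^ 2 = 0 := by
    rcases mul_eq_zero.mp hsq with h | h
    · rcases mul_eq_zero.mp h with h' | h'
      · exfalso; linarith
      · exact h'
    · exfalso; linarith
  have := pow_eq_zero_iff (n := 2) (by norm_num) |>.mp hz0
  linarith [sub_eq_zero.mp this]
end

section
/- Let r1 >= r2 > 1, r3 > 1, alpha in [0, 2pi]. A complex hyperbolic ultra-parallel [m1, m2, m3]-triangle group (with rj = cosh(mj/2), sj = sinh(mj/2), m3 > 0) exists if and only if cos(alpha) <= (r1^2 + r2^2 + r3^2 - 1)/(2 r1 r2 r3). Concretely: the real number z1^2 := |s3^{-1}(r1 r3 - r2 e^{-i alpha})|^2 - r1^2 + 1 is nonnegative if and only if cos(alpha) <= (r1^2 + r2^2 + r3^2 - 1)/(2 r1 r2 r3). -/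
/-- Existence criterion: `z₁² = |s₃⁻¹(r₁r₃ - r₂e^{-iα})|² - r₁² + 1 ≥ 0` if and only if
`cos α ≤ (r₁²+r₂²+r₃²-1)/(2r₁r₂r₃)`. -/
theorem stmt_5 (r1 r2 r3 s3 α : ℝ) (h12 : r2 ≤ r1) (h2 : 1 < r2) (h3 : 1 < r3)
    (hs : 0 < s3) (hrs : r3 ^ 2 - s3 ^ 2 = 1) (hα : α ∈ Set.Icc 0 (2 * Real.pi)) :
    0 ≤ (‖(s3 : ℂ)⁻¹ *
        ((r1 : ℂ) * r3 - r2 * Complex.exp (-(α * Complex.I)))‖) ^ 2 - r1 ^ 2 + 1 ↔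
      Real.cos α ≤ (r1 ^ 2 + r2 ^ 2 + r3 ^ 2 - 1) / (2 * r1 * r2 * r3) := by
  have h1 : (1:ℝ) < r1 := lt_of_lt_of_le h2 h12
  have hpos : (0:ℝ) < 2 * r1 * r2 * r3 := by positivity
  have hs2 : (0:ℝ) < s3 ^ 2 := by positivity
  set A : ℝ := r1 * r3 - r2 * Real.cos α with hA
  set B : ℝ := r2 * Real.sin α with hB
  have habs : (‖(s3 : ℂ)⁻¹ *
      ((r1 : ℂ) * r3 - r2 * Complex.exp (-(α * Complex.I)))‖) ^ 2
      = (A ^ 2 + B ^ 2) / s3 ^ 2 := by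
    have hw : ((r1:ℂ) * r3 - r2 * Complex.exp (-(α * Complex.I)))
        = (A : ℂ) + (B : ℂ) * Complex.I := by
      have h0 : -((α:ℂ) * Complex.I) = ((-α : ℝ) : ℂ) * Complex.I := by
        push_cast; ring
      rw [h0, Complex.exp_mul_I]
      simp only [hA, hB, ← Complex.ofReal_cos, ← Complex.ofReal_sin]
      push_cast
      rw [Complex.cos_neg, Complex.sin_neg]
      ring
    rw [norm_mul, mul_pow, norm_inv, Complex.norm_real, Real.norm_eq_abs, hw, Complex.sq_norm,
      Complex.normSq_add_mul_I, abs_of_pos hs]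
    field_simp
  rw [habs, le_div_iff₀ hpos]
  have hsin := Real.sin_sq_add_cos_sq α
  have hdiv : (A ^ 2 + B ^ 2) / s3 ^ 2 * s3 ^ 2 = A ^ 2 + B ^ 2 :=
    div_mul_cancel₀ _ (ne_of_gt hs2)
  have hsin2 : B ^ 2 = r2 ^ 2 - r2 ^ 2 * Real.cos α ^ 2 := by
    rw [hB]; nlinarith [hsin]
  constructor
  · intro h
    have hle : (r1 ^ 2 - 1) * s3 ^ 2 ≤ A ^ 2 + B ^ 2 := by
      have := mul_le_mul_of_nonneg_right
        (by linarith : r1 ^ 2 - 1 ≤ (A ^ 2 + B ^ 2) / s3 ^ 2) (le_of_lt hs2)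
      rwa [hdiv] at this
    nlinarith [hle, hsin2, hrs]
  · intro h
    have hs3 : s3 ^ 2 = r3 ^ 2 - 1 := by linarith
    have hle : (r1 ^ 2 - 1) * s3 ^ 2 ≤ A ^ 2 + B ^ 2 := by
      rw [hs3]
      simp only [hA, hB] at hsin2 ⊢
      nlinarith [h, hsin2]
    have := (le_div_iff₀ hs2).mpr hle
    linarith
end

section
/- Let r1 >= r2 > 1 and define X = (r1^2 - 1)/(r2^2 - 1) - 1 >= 0 and Y = 1/(r2^2 - 1) > 0, so r1 = sqrt(1 + (X+1)/Y) and r2 = sqrt(1 + 1/Y). With t_n as in the previous statement, for n >= 2 one has t_{n-1} - t_n = (X(1-n) + 2) / (2 n (n^2 - 1) sqrt((1+Y)(1+X+Y))). In particular, t_n <= t_{n-1} if and only if X <= 2/(n-1). -/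
/-- In coordinates `X = (r₁²-1)/(r₂²-1) - 1`, `Y = 1/(r₂²-1)`, for `n ≥ 2`:
`t_{n-1} - tₙ = (X(1-n)+2)/(2n(n²-1)√((1+Y)(1+X+Y)))`; in particular
`tₙ ≤ t_{n-1}` if and only if `X ≤ 2/(n-1)`. -/
theorem stmt_9 (r1 r2 X Y : ℝ) (h12 : r2 ≤ r1) (h2 : 1 < r2)
    (hX : X = (r1 ^ 2 - 1) / (r2 ^ 2 - 1) - 1) (hY : Y = 1 / (r2 ^ 2 - 1))
    (n : ℕ) (hn : 2 ≤ n) :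
    let t : ℕ → ℝ := fun k =>
      ((r1 ^ 2 + r2 ^ 2) * (k : ℝ) ^ 2 + r2 ^ 2 * (2 * (k : ℝ) + 1) - 1) /
        (2 * r1 * r2 * (k : ℝ) * ((k : ℝ) + 1))
    t (n - 1) - t n =
      (X * (1 - (n : ℝ)) + 2) /
        (2 * (n : ℝ) * ((n : ℝ) ^ 2 - 1) * Real.sqrt ((1 + Y) * (1 + X + Y))) ∧
    (t n ≤ t (n - 1) ↔ X ≤ 2 / ((n : ℝ) - 1)) := by
  intro t
  have hr1 : 1 < r1 := lt_of_lt_of_le h2 h12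
  have hs : (0:ℝ) < r2 ^ 2 - 1 := by nlinarith
  have hr1p : (0:ℝ) < r1 := by linarith
  have hr2p : (0:ℝ) < r2 := by linarith
  have hsq : Real.sqrt ((1 + Y) * (1 + X + Y)) = r1 * r2 / (r2 ^ 2 - 1) := by
    have h1 : (1 + Y) * (1 + X + Y) = (r1 * r2 / (r2 ^ 2 - 1)) ^ 2 := by
      rw [hX, hY]; field_simp; ring
    rw [h1, Real.sqrt_sq (by positivity)]
  have hncast : ((n - 1 : ℕ) : ℝ) = (n : ℝ) - 1 := by
    have : (1:ℕ) ≤ n := by omega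
    push_cast [Nat.cast_sub this]; ring
  have hn1 : (1:ℝ) < (n : ℝ) := by exact_mod_cast Nat.lt_of_lt_of_le one_lt_two hn
  have hn0 : (n:ℝ) ≠ 0 := by positivity
  have hnm1 : (n:ℝ) - 1 ≠ 0 := by linarith
  have hnp1 : (n:ℝ) + 1 ≠ 0 := by positivity
  have hn2 : (n:ℝ) ^ 2 - 1 ≠ 0 := by nlinarith
  have heq : t (n - 1) - t n =
      (X * (1 - (n : ℝ)) + 2) /
        (2 * (n : ℝ) * ((n : ℝ) ^ 2 - 1) * Real.sqrt ((1 + Y) * (1 + X + Y))) := by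
    rw [hsq]
    simp only [t, hncast, hX, sub_add_cancel]
    field_simp
    ring
  refine ⟨heq, ?_⟩
  have hdpos : 0 < 2 * (n : ℝ) * ((n : ℝ) ^ 2 - 1) * Real.sqrt ((1 + Y) * (1 + X + Y)) := by
    rw [hsq]
    have : (0:ℝ) < (n:ℝ)^2 - 1 := by nlinarith
    positivity
  constructor
  · intro h
    have h0 : 0 ≤ t (n-1) - t n := by linarith
    rw [heq] at h0
    have hnum : 0 ≤ X * (1 - (n : ℝ)) + 2 := by
      by_contra hc
      push_neg at hc
      have := div_neg_of_neg_of_pos hc hdpos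
      linarith
    rw [le_div_iff₀ (by linarith)]
    nlinarith
  · intro h
    have hX2 : X * ((n:ℝ) - 1) ≤ 2 := by
      rw [le_div_iff₀ (by linarith)] at h; linarith
    have hnum : 0 ≤ X * (1 - (n : ℝ)) + 2 := by nlinarith
    have : 0 ≤ t (n-1) - t n := by
      rw [heq]; positivity
    linarith
end

section
/- Let r1 >= r2 > 1 and n a positive integer with 2/n <= X <= 2/(n-1) (the upper bound omitted when n = 1), where X = (r1^2-1)/(r2^2-1) - 1. Then t_n <= t_m for every positive integer m != n, where t_k = ((r1^2 + r2^2) k^2 + r2^2 (2k+1) - 1)/(2 r1 r2 k (k+1)). -/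
/-- If `2/n ≤ X ≤ 2/(n-1)` (upper bound omitted when `n = 1`), where
`X = (r₁²-1)/(r₂²-1) - 1`, then `tₙ ≤ tₘ` for every positive integer `m ≠ n`. -/
theorem stmt_10 (r1 r2 X : ℝ) (h12 : r2 ≤ r1) (h2 : 1 < r2)
    (hX : X = (r1 ^ 2 - 1) / (r2 ^ 2 - 1) - 1) (n : ℕ) (hn : 0 < n)
    (hlo : 2 / (n : ℝ) ≤ X) (hhi : 2 ≤ n → X ≤ 2 / ((n : ℝ) - 1)) :
    let t : ℕ → ℝ := fun k =>
      ((r1 ^ 2 + r2 ^ 2) * (k : ℝ) ^ 2 + r2 ^ 2 * (2 * (k : ℝ) + 1) - 1) /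
        (2 * r1 * r2 * (k : ℝ) * ((k : ℝ) + 1))
    ∀ m : ℕ, 0 < m → m ≠ n → t n ≤ t m := by
  intro t m hm hmn
  have hr2 : (0:ℝ) < r2 := by linarith
  have hr1 : (0:ℝ) < r1 := by linarith
  have h2' : (0:ℝ) < r2 ^ 2 - 1 := by nlinarith
  have hD : (0:ℝ) ≤ r1 ^ 2 - r2 ^ 2 := by nlinarith
  have hn' : (0:ℝ) < (n:ℝ) := by exact_mod_cast hn
  have hXq : X = (r1 ^ 2 - r2 ^ 2) / (r2 ^ 2 - 1) := by
    rw [hX]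
    field_simp
    ring
  -- key consequence of hlo
  have hA : 2 * (r2 ^ 2 - 1) ≤ (n:ℝ) * (r1 ^ 2 - r2 ^ 2) := by
    rw [hXq, div_le_div_iff₀ hn' h2'] at hlo
    linarith [hlo]
  -- one-step monotonicity lemmas
  have stepup : ∀ k : ℕ, 1 ≤ k → 2 * (r2 ^ 2 - 1) ≤ (k:ℝ) * (r1 ^ 2 - r2 ^ 2) →
      t k ≤ t (k + 1) := by
    intro k hk hkD
    have hk' : (1:ℝ) ≤ (k:ℝ) := by exact_mod_cast hk
    have hk0 : (0:ℝ) < (k:ℝ) := by linarith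
    have hd1 : (0:ℝ) < 2 * r1 * r2 * (k:ℝ) * ((k:ℝ) + 1) :=
      mul_pos (mul_pos (mul_pos (mul_pos two_pos hr1) hr2) hk0) (by linarith)
    have hd2 : (0:ℝ) < 2 * r1 * r2 * ((k:ℝ) + 1) * (((k:ℝ) + 1) + 1) :=
      mul_pos (mul_pos (mul_pos (mul_pos two_pos hr1) hr2) (by linarith)) (by linarith)
    show _ / _ ≤ _ / _
    push_cast
    rw [div_le_div_iff₀ hd1 hd2]
    have key : ((r1 ^ 2 + r2 ^ 2) * ((k:ℝ) + 1) ^ 2 + r2 ^ 2 * (2 * ((k:ℝ) + 1) + 1) - 1) *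
          (2 * r1 * r2 * (k:ℝ) * ((k:ℝ) + 1)) -
        ((r1 ^ 2 + r2 ^ 2) * (k:ℝ) ^ 2 + r2 ^ 2 * (2 * (k:ℝ) + 1) - 1) *
          (2 * r1 * r2 * ((k:ℝ) + 1) * (((k:ℝ) + 1) + 1)) =
        2 * r1 * r2 * ((k:ℝ) + 1) *
          ((k:ℝ) * (r1 ^ 2 - r2 ^ 2) - 2 * (r2 ^ 2 - 1)) := by ring
    have hpos : (0:ℝ) ≤ 2 * r1 * r2 * ((k:ℝ) + 1) *
        ((k:ℝ) * (r1 ^ 2 - r2 ^ 2) - 2 * (r2 ^ 2 - 1)) :=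
      mul_nonneg (by positivity) (by linarith)
    linarith [key, hpos]
  have stepdown : ∀ k : ℕ, 1 ≤ k → (k:ℝ) * (r1 ^ 2 - r2 ^ 2) ≤ 2 * (r2 ^ 2 - 1) →
      t (k + 1) ≤ t k := by
    intro k hk hkD
    have hk' : (1:ℝ) ≤ (k:ℝ) := by exact_mod_cast hk
    have hk0 : (0:ℝ) < (k:ℝ) := by linarith
    have hd1 : (0:ℝ) < 2 * r1 * r2 * (k:ℝ) * ((k:ℝ) + 1) :=
      mul_pos (mul_pos (mul_pos (mul_pos two_pos hr1) hr2) hk0) (by linarith)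
    have hd2 : (0:ℝ) < 2 * r1 * r2 * ((k:ℝ) + 1) * (((k:ℝ) + 1) + 1) :=
      mul_pos (mul_pos (mul_pos (mul_pos two_pos hr1) hr2) (by linarith)) (by linarith)
    show _ / _ ≤ _ / _
    push_cast
    rw [div_le_div_iff₀ hd2 hd1]
    have key : ((r1 ^ 2 + r2 ^ 2) * ((k:ℝ) + 1) ^ 2 + r2 ^ 2 * (2 * ((k:ℝ) + 1) + 1) - 1) *
          (2 * r1 * r2 * (k:ℝ) * ((k:ℝ) + 1)) -
        ((r1 ^ 2 + r2 ^ 2) * (k:ℝ) ^ 2 + r2 ^ 2 * (2 * (k:ℝ) + 1) - 1) *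
          (2 * r1 * r2 * ((k:ℝ) + 1) * (((k:ℝ) + 1) + 1)) =
        2 * r1 * r2 * ((k:ℝ) + 1) *
          ((k:ℝ) * (r1 ^ 2 - r2 ^ 2) - 2 * (r2 ^ 2 - 1)) := by ring
    have hpos : (0:ℝ) ≤ 2 * r1 * r2 * ((k:ℝ) + 1) *
        (2 * (r2 ^ 2 - 1) - (k:ℝ) * (r1 ^ 2 - r2 ^ 2)) :=
      mul_nonneg (by positivity) (by linarith)
    nlinarith [key, hpos]
  rcases lt_or_ge m n with hlt | hge
  · -- m < n, so n ≥ 2 and we use hhi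
    have hn2 : 2 ≤ n := by omega
    have hn2' : (1:ℝ) ≤ (n:ℝ) - 1 := by
      have : (2:ℝ) ≤ (n:ℝ) := by exact_mod_cast hn2
      linarith
    have hB : ((n:ℝ) - 1) * (r1 ^ 2 - r2 ^ 2) ≤ 2 * (r2 ^ 2 - 1) := by
      have h := hhi hn2
      rw [hXq, div_le_div_iff₀ h2' (by linarith : (0:ℝ) < (n:ℝ) - 1)] at h
      linarith [h]
    have down : ∀ k : ℕ, m ≤ k → k ≤ n → t k ≤ t m := by
      intro k
      induction k with
      | zero => intro h _; omega
      | succ j ih =>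
        intro hmj hjn
        rcases eq_or_lt_of_le hmj with he | hlt'
        · rw [← he]
        · have hmj' : m ≤ j := by omega
          have hj1 : 1 ≤ j := by omega
          have hjn1 : (j:ℝ) ≤ (n:ℝ) - 1 := by
            have : (j:ℝ) + 1 ≤ (n:ℝ) := by exact_mod_cast hjn
            linarith
          have : (j:ℝ) * (r1 ^ 2 - r2 ^ 2) ≤ 2 * (r2 ^ 2 - 1) := by
            nlinarith [mul_le_mul_of_nonneg_right hjn1 hD]
          exact le_trans (stepdown j hj1 this) (ih hmj' (by omega))
    exact down n (le_of_lt hlt) le_rfl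
  · -- n ≤ m
    have up : ∀ k : ℕ, n ≤ k → t n ≤ t k := by
      intro k
      induction k with
      | zero => intro h; omega
      | succ j ih =>
        intro hnj
        rcases eq_or_lt_of_le hnj with he | hlt'
        · rw [he]
        · have hnj' : n ≤ j := by omega
          have hj1 : 1 ≤ j := by omega
          have hnjr : (n:ℝ) ≤ (j:ℝ) := by exact_mod_cast hnj'
          have : 2 * (r2 ^ 2 - 1) ≤ (j:ℝ) * (r1 ^ 2 - r2 ^ 2) := by
            nlinarith [mul_le_mul_of_nonneg_right hnjr hD]
          exact le_trans (ih hnj') (stepup j hj1 this)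
    exact up m hge
end

section
/- In the Heisenberg group H = C x R with group law [z1,t1]*[z2,t2] = [z1+z2, t1+t2+2 Im(z1 conj(z2))] and Cygan metric rho0([z1,t1],[z2,t2]) = | |z1-z2|^2 - i t1 + i t2 - 2 i Im(z1 conj(z2)) |^{1/2}, let o = [0,0], r1 >= r2 > 0, theta real, and q = [2(r1 e^{-i theta} + r2 e^{i theta}), -8 r1 r2 sin(2 theta)]. Then rho0(o, q)^4 = (4|r1 e^{-i theta} + r2 e^{i theta}|^2)^2 + 64 r1^2 r2^2 sin^2(2 theta), and the inequality rho0(o,q)^4 >= 16 is equivalent to 8 r1 r2 (r1^2 + r2^2) cos^2(theta) + r1^4 - 4 r1^3 r2 + 6 r1^2 r2^2 - 4 r1 r2^3 + r2^4 - 1 >= 0. -/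
/-- In the Heisenberg group with the Cygan metric, for `o = [0,0]` and
`q = [2(r₁e^{-iθ} + r₂e^{iθ}), -8r₁r₂sin(2θ)]`:
`ρ₀(o,q)⁴ = (4|r₁e^{-iθ}+r₂e^{iθ}|²)² + 64r₁²r₂²sin²(2θ)`, and `ρ₀(o,q)⁴ ≥ 16` iff
`8r₁r₂(r₁²+r₂²)cos²θ + r₁⁴ - 4r₁³r₂ + 6r₁²r₂² - 4r₁r₂³ + r₂⁴ - 1 ≥ 0`. -/
theorem stmt_11 (r1 r2 θ : ℝ) (h12 : r2 ≤ r1) (h2 : 0 < r2) :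
    let ζ : ℂ := 2 * ((r1 : ℂ) * Complex.exp (-(θ * Complex.I)) +
      (r2 : ℂ) * Complex.exp (θ * Complex.I))
    let t : ℝ := -8 * r1 * r2 * Real.sin (2 * θ)
    -- Cygan distance ρ₀(o, q) for o = [0,0], q = [ζ, t]
    let ρ0 : ℝ := Real.sqrt (‖
      ((((‖0 - ζ‖) ^ 2 : ℝ) : ℂ) - Complex.I * (0 : ℝ) + Complex.I * (t : ℝ)
        - 2 * Complex.I * ((((0 : ℂ) * (starRingEnd ℂ) ζ).im : ℝ) : ℂ))‖)
    ρ0 ^ 4 = (4 * (‖((r1 : ℂ) * Complex.exp (-(θ * Complex.I)) +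
        (r2 : ℂ) * Complex.exp (θ * Complex.I))‖) ^ 2) ^ 2 +
        64 * r1 ^ 2 * r2 ^ 2 * (Real.sin (2 * θ)) ^ 2 ∧
    (16 ≤ ρ0 ^ 4 ↔
      0 ≤ 8 * r1 * r2 * (r1 ^ 2 + r2 ^ 2) * (Real.cos θ) ^ 2 + r1 ^ 4 - 4 * r1 ^ 3 * r2 +
        6 * r1 ^ 2 * r2 ^ 2 - 4 * r1 * r2 ^ 3 + r2 ^ 4 - 1) := by
  intro ζ t ρ0
  set w : ℂ := (r1 : ℂ) * Complex.exp (-(θ * Complex.I)) +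
      (r2 : ℂ) * Complex.exp (θ * Complex.I) with hw
  have hre : w.re = (r1 + r2) * Real.cos θ := by
    simp [hw, Complex.exp_re, Complex.exp_im]; ring
  have him : w.im = (r2 - r1) * Real.sin θ := by
    simp [hw, Complex.exp_re, Complex.exp_im]; ring
  set X : ℂ := (((‖0 - ζ‖) ^ 2 : ℝ) : ℂ) - Complex.I * (0 : ℝ)
      + Complex.I * (t : ℝ) - 2 * Complex.I * ((((0 : ℂ) * (starRingEnd ℂ) ζ).im : ℝ) : ℂ)
      with hX
  have hζ : ‖ζ‖ = 2 * ‖w‖ := by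
    show ‖2 * w‖ = 2 * ‖w‖
    rw [norm_mul]; simp
  have hXre : X.re = 4 * ‖w‖ ^ 2 := by
    simp [hX, ← Complex.ofReal_pow, hζ]; ring
  have hXim : X.im = t := by simp [hX, ← Complex.ofReal_pow]
  have key : ρ0 ^ 4 = (4 * ‖w‖ ^ 2) ^ 2
      + 64 * r1 ^ 2 * r2 ^ 2 * (Real.sin (2 * θ)) ^ 2 := by
    have h1 : ρ0 ^ 4 = (‖X‖) ^ 2 := by
      show (Real.sqrt (‖X‖)) ^ 4 = _
      rw [show (4 : ℕ) = 2 * 2 from rfl, pow_mul,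
        Real.sq_sqrt (norm_nonneg X)]
    have h2 : (‖X‖) ^ 2 = X.re ^ 2 + X.im ^ 2 := by
      rw [Complex.sq_norm, Complex.normSq_apply]; ring
    rw [h1, h2, hXre, hXim]
    show _ = _ + 64 * r1 ^ 2 * r2 ^ 2 * (Real.sin (2 * θ)) ^ 2
    have ht : t = -8 * r1 * r2 * Real.sin (2 * θ) := rfl
    rw [ht]; ring
  refine ⟨key, ?_⟩
  rw [key]
  have habsw : ‖w‖ ^ 2 = ((r1 + r2) * Real.cos θ) ^ 2
      + ((r2 - r1) * Real.sin θ) ^ 2 := by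
    rw [Complex.sq_norm, Complex.normSq_apply, hre, him]; ring
  have hs2 : Real.sin (2 * θ) = 2 * Real.sin θ * Real.cos θ := Real.sin_two_mul θ
  rw [habsw, hs2]
  have hE : (4 * (((r1 + r2) * Real.cos θ) ^ 2 + ((r2 - r1) * Real.sin θ) ^ 2)) ^ 2
      + 64 * r1 ^ 2 * r2 ^ 2 * (2 * Real.sin θ * Real.cos θ) ^ 2
      = 16 * ((8 * r1 * r2 * (r1 ^ 2 + r2 ^ 2) * (Real.cos θ) ^ 2 + r1 ^ 4 - 4 * r1 ^ 3 * r2 +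
        6 * r1 ^ 2 * r2 ^ 2 - 4 * r1 * r2 ^ 3 + r2 ^ 4 - 1) + 1) := by
    linear_combination ((r1 + r2) ^ 4 * (Real.cos θ) ^ 2
      + (r1 - r2) ^ 4 * ((Real.sin θ) ^ 2 + 1)
      + (15 * (r1 ^ 4 + r2 ^ 4) + 90 * r1 ^ 2 * r2 ^ 2) *
        ((Real.sin θ) ^ 2 + (Real.cos θ) ^ 2 + 1)
      + 60 * r1 * r2 * (r1 ^ 2 + r2 ^ 2) *
        ((Real.cos θ) ^ 2 - (Real.sin θ) ^ 2 - 1)) * Real.sin_sq_add_cos_sq θ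
  rw [hE]
  constructor <;> intro h <;> linarith
end

section
/- In the vector space C^{2,1} with Hermitian form <z,w> = z1 conj(w1) + z2 conj(w2) - z3 conj(w3), let n3 = (z1, r1, z3)^T, n2 = (0,1,0)^T, n1 = (0, r3, s3)^T with z1 real nonnegative, z3 = s3^{-1}(r1 r3 - r2 e^{-i alpha}), z1^2 = |z3|^2 - r1^2 + 1, where r1, r2, r3 > 1, s3 = sqrt(r3^2 - 1) > 0. Then <n1,n1> = <n2,n2> = <n3,n3> = 1, |<n3, n2>| = r1, |<n2, n1>| = r3, |<n1, n3>| = r2, and arg(<n1,n3><n2,n1><n3,n2>) = alpha (for alpha in (0, 2pi) with r1 r3 != r2 e^{-i alpha}). -/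
open ComplexConjugate

/-- The normalized polar vectors `n₁, n₂, n₃` of the parameterization satisfy
`⟨nⱼ,nⱼ⟩ = 1`, `|⟨n₃,n₂⟩| = r₁`, `|⟨n₂,n₁⟩| = r₃`, `|⟨n₁,n₃⟩| = r₂`, and the angular
invariant `arg(⟨n₁,n₃⟩⟨n₂,n₁⟩⟨n₃,n₂⟩) = α` (as an angle mod 2π). -/
theorem stmt_15 (r1 r2 r3 s3 α : ℝ) (h1 : 1 < r1) (h2 : 1 < r2) (h3 : 1 < r3)
    (hs : 0 < s3) (hrs : r3 ^ 2 - s3 ^ 2 = 1) (z1 : ℝ) (hz1 : 0 ≤ z1)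
    (z3 : ℂ) (hz3 : z3 = (s3 : ℂ)⁻¹ * ((r1 : ℂ) * r3 - r2 * Complex.exp (-(α * Complex.I))))
    (hz1sq : z1 ^ 2 = ‖z3‖ ^ 2 - r1 ^ 2 + 1)
    (hα : α ∈ Set.Ioo 0 (2 * Real.pi))
    (hne : (r1 : ℂ) * r3 ≠ r2 * Complex.exp (-(α * Complex.I))) :
    let herm : (Fin 3 → ℂ) → (Fin 3 → ℂ) → ℂ := fun z w =>
      z 0 * conj (w 0) + z 1 * conj (w 1) - z 2 * conj (w 2)
    let n3 : Fin 3 → ℂ := ![(z1 : ℂ), (r1 : ℂ), z3]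
    let n2 : Fin 3 → ℂ := ![0, 1, 0]
    let n1 : Fin 3 → ℂ := ![0, (r3 : ℂ), (s3 : ℂ)]
    herm n1 n1 = 1 ∧ herm n2 n2 = 1 ∧ herm n3 n3 = 1 ∧
    ‖herm n3 n2‖ = r1 ∧ ‖herm n2 n1‖ = r3 ∧
    ‖herm n1 n3‖ = r2 ∧
    ((Complex.arg (herm n1 n3 * herm n2 n1 * herm n3 n2) : Real.Angle) = (α : Real.Angle)) := by
  intro herm n3 n2 n1
  have hs3 : (s3 : ℂ) ≠ 0 := Complex.ofReal_ne_zero.mpr hs.ne'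
  -- key simplification: herm n1 n3 = r2 * exp(α I)
  have hconj : conj z3 = (s3 : ℂ)⁻¹ * ((r1 : ℂ) * r3 - r2 * Complex.exp (α * Complex.I)) := by
    rw [hz3]
    simp [map_mul, map_sub, ← Complex.exp_conj, map_neg, Complex.conj_I, Complex.conj_ofReal]
  have h13 : herm n1 n3 = (r2 : ℂ) * Complex.exp (α * Complex.I) := by
    simp only [herm, n1, n3, Matrix.cons_val_zero, Matrix.cons_val_one, Matrix.head_cons,
      Matrix.cons_val_two, Matrix.tail_cons]
    rw [hconj]
    simp only [Complex.conj_ofReal]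
    field_simp
    ring
  have h21 : herm n2 n1 = (r3 : ℂ) := by
    simp [herm, n2, n1, Complex.conj_ofReal]
  have h32 : herm n3 n2 = (r1 : ℂ) := by
    simp [herm, n3, n2]
  have h11 : herm n1 n1 = 1 := by
    simp only [herm, n1, Matrix.cons_val_zero, Matrix.cons_val_one, Matrix.head_cons,
      Matrix.cons_val_two, Matrix.tail_cons, Complex.conj_ofReal]
    rw [show ((r3 : ℂ) * r3 : ℂ) = ((r3 ^ 2 : ℝ) : ℂ) by push_cast; ring]
    rw [show ((s3 : ℂ) * s3 : ℂ) = ((s3 ^ 2 : ℝ) : ℂ) by push_cast; ring]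
    rw [show (0 : ℂ) * conj 0 = 0 by simp, zero_add, ← Complex.ofReal_sub, hrs,
      Complex.ofReal_one]
  have h22 : herm n2 n2 = 1 := by simp [herm, n2]
  have h33 : herm n3 n3 = 1 := by
    simp only [herm, n3, Matrix.cons_val_zero, Matrix.cons_val_one, Matrix.head_cons,
      Matrix.cons_val_two, Matrix.tail_cons, Complex.conj_ofReal]
    rw [Complex.mul_conj]
    have : Complex.normSq z3 = ‖z3‖ ^ 2 := (Complex.sq_norm z3).symm
    rw [this]
    rw [show ((z1 : ℂ) * z1 : ℂ) = ((z1 ^ 2 : ℝ) : ℂ) by push_cast; ring]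
    rw [show ((r1 : ℂ) * r1 : ℂ) = ((r1 ^ 2 : ℝ) : ℂ) by push_cast; ring]
    rw [hz1sq]
    push_cast
    ring
  have habsexp : ‖Complex.exp (α * Complex.I)‖ = 1 := by
    rw [Complex.norm_exp]
    simp
  refine ⟨h11, h22, h33, ?_, ?_, ?_, ?_⟩
  · rw [h32, Complex.norm_real, Real.norm_eq_abs, abs_of_pos (by linarith)]
  · rw [h21, Complex.norm_real, Real.norm_eq_abs, abs_of_pos (by linarith)]
  · rw [h13, norm_mul, habsexp, Complex.norm_real, Real.norm_eq_abs, abs_of_pos (by linarith), mul_one]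
  · rw [h13, h21, h32]
    have : (r2 : ℂ) * Complex.exp (α * Complex.I) * r3 * r1
        = ((r1 * r2 * r3 : ℝ) : ℂ) * Complex.exp (α * Complex.I) := by push_cast; ring
    rw [this, Complex.arg_real_mul _ (by positivity), Complex.exp_mul_I]
    exact_mod_cast Complex.arg_cos_add_sin_mul_I_coe_angle (α : Real.Angle)
end
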